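/- arXiv:2410.23862 — 6 statements merged into one kernel-verified Lean document; each statement's English description precedes it below -/
import Mathlib

section
/- In the linear SEM setup, for every strictly upper triangular matrix W : Matrix (Fin d) (Fin d) ℝ (W i j = 0 unless i < j), the residual decomposition E[‖x − (Wᵀ).mulVec x‖²] = E[‖N‖²] + E[‖((W⋆ − W)ᵀ).mulVec x‖²] holds. -/
open MeasureTheory

section aux

variable {Ω : Type*} [MeasurableSpace Ω] {P : Measure Ω}

private lemma aux_int_mul {f g : Ω → ℝ} (hf : MemLp f 2 P) (hg : MemLp g 2 P) :
    Integrable (fun ω => f ω * g ω) P := by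
  have h : MemLp (f • g) 1 P :=
    hg.smul hf
  have := memLp_one_iff_integrable.mp h
  exact this

end aux

/-- Residual decomposition in the linear SEM model: for any matrix `W` that is strictly
upper triangular (in the true topological ordering),
`E[‖x − Wᵀ x‖²] = E[‖N‖²] + E[‖(W⋆ − W)ᵀ x‖²]`. -/
theorem sem_residual_decomposition {d : ℕ} {Ω : Type*} [MeasurableSpace Ω]
    (P : Measure Ω) [IsProbabilityMeasure P]
    (N : Ω → EuclideanSpace ℝ (Fin d))
    (hN2 : ∀ i, MemLp (fun ω => N ω i) 2 P)
    (hNmean : ∀ i, ∫ ω, N ω i ∂P = 0)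
    (hNuncorr : ∀ i j, i ≠ j → ∫ ω, N ω i * N ω j ∂P = 0)
    (Wstar : Matrix (Fin d) (Fin d) ℝ)
    (hWstar : ∀ i j : Fin d, ¬ i < j → Wstar i j = 0)
    (x : Ω → EuclideanSpace ℝ (Fin d))
    (hx : ∀ ω, x ω = (WithLp.equiv 2 (Fin d → ℝ)).symm
      ((1 - Wstar.transpose)⁻¹.mulVec (WithLp.equiv 2 (Fin d → ℝ) (N ω))))
    (W : Matrix (Fin d) (Fin d) ℝ)
    (hW : ∀ i j : Fin d, ¬ i < j → W i j = 0) :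
    ∫ ω, ‖x ω - (WithLp.equiv 2 (Fin d → ℝ)).symm
        (W.transpose.mulVec (WithLp.equiv 2 (Fin d → ℝ) (x ω)))‖ ^ 2 ∂P
      = (∫ ω, ‖N ω‖ ^ 2 ∂P)
        + ∫ ω, ‖(WithLp.equiv 2 (Fin d → ℝ)).symm
            ((Wstar - W).transpose.mulVec (WithLp.equiv 2 (Fin d → ℝ) (x ω)))‖ ^ 2 ∂P := by
  classical
  set e := WithLp.equiv 2 (Fin d → ℝ) with he
  set B : Matrix (Fin d) (Fin d) ℝ := 1 - Wstar.transpose with hB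
  set A : Matrix (Fin d) (Fin d) ℝ := B⁻¹ with hA
  set Nv : Ω → Fin d → ℝ := fun ω => e (N ω) with hNv
  -- triangularity of B
  have hBtri : B.BlockTriangular OrderDual.toDual := by
    intro i j hij
    have hij' : i < j := hij
    simp [hB, Matrix.sub_apply, Matrix.one_apply, Matrix.transpose_apply, hij'.ne,
      hWstar j i (asymm hij')]
  have hdet : IsUnit B.det := by
    rw [Matrix.det_of_lowerTriangular B hBtri]
    have : ∀ i : Fin d, B i i = 1 := by
      intro i
      simp [hB, Matrix.sub_apply, Matrix.one_apply, Matrix.transpose_apply,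
        hWstar i i (lt_irrefl i)]
    simp [this]
  haveI : Invertible B := B.invertibleOfIsUnitDet hdet
  have hAtri : A.BlockTriangular OrderDual.toDual :=
    Matrix.blockTriangular_inv_of_blockTriangular hBtri
  have hAzero : ∀ j k : Fin d, j < k → A j k = 0 := fun j k h => hAtri h
  -- the coordinates of x
  have hxv : ∀ ω, e (x ω) = A.mulVec (Nv ω) := by
    intro ω
    rw [hx ω]
    exact (WithLp.equiv 2 (Fin d → ℝ)).apply_symm_apply _
  have hBA : B * A = 1 := Matrix.mul_nonsing_inv B hdet
  -- the residual decomposition, pointwise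
  set M : Matrix (Fin d) (Fin d) ℝ := Wstar - W with hM
  set v : Ω → EuclideanSpace ℝ (Fin d) :=
    fun ω => e.symm (M.transpose.mulVec (e (x ω))) with hv
  have hMzero : ∀ j k : Fin d, ¬ j < k → M j k = 0 := by
    intro j k h; simp [hM, Matrix.sub_apply, hWstar j k h, hW j k h]
  have key : ∀ ω, x ω - e.symm (W.transpose.mulVec (e (x ω))) = N ω + v ω := by
    intro ω
    apply e.injective
    have h1 : e (x ω - e.symm (W.transpose.mulVec (e (x ω))))
        = e (x ω) - W.transpose.mulVec (e (x ω)) := by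
      simp [he]
    have h2 : e (N ω + v ω) = Nv ω + M.transpose.mulVec (e (x ω)) := by
      simp [hv, he, hNv]
    rw [h1, h2, hxv ω]
    have : A.mulVec (Nv ω) - W.transpose.mulVec (A.mulVec (Nv ω))
        = (1 - W.transpose).mulVec (A.mulVec (Nv ω)) := by
      rw [Matrix.sub_mulVec, Matrix.one_mulVec]
    rw [this]
    have hsplit : (1 : Matrix (Fin d) (Fin d) ℝ) - W.transpose = B + M.transpose := by
      simp [hB, hM, Matrix.transpose_sub]
    rw [hsplit, Matrix.add_mulVec, Matrix.mulVec_mulVec, hBA, Matrix.one_mulVec]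
  -- coordinates of v as a linear map of N
  set C : Matrix (Fin d) (Fin d) ℝ := M.transpose * A with hC
  have hvC : ∀ ω, e (v ω) = C.mulVec (Nv ω) := by
    intro ω
    simp only [hv, he]
    rw [(WithLp.equiv 2 (Fin d → ℝ)).apply_symm_apply, hxv ω, Matrix.mulVec_mulVec]
  have hCzero : ∀ i k : Fin d, ¬ k < i → C i k = 0 := by
    intro i k h
    rw [hC, Matrix.mul_apply]
    apply Finset.sum_eq_zero
    intro j _
    rcases lt_or_ge j i with hji | hij
    · rw [hAzero j k (lt_of_lt_of_le hji (not_lt.mp h)), mul_zero]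
    · rw [Matrix.transpose_apply, hMzero j i (not_lt.mpr hij), zero_mul]
  -- coordinates of v
  have hvi : ∀ ω i, v ω i = ∑ k, C i k * N ω k := by
    intro ω i
    have h0 : v ω i = C.mulVec (Nv ω) i := congrFun (hvC ω) i
    rw [h0]
    simp [Matrix.mulVec, dotProduct, hNv, he]
  have hv2 : ∀ i, MemLp (fun ω => v ω i) 2 P := by
    intro i
    have : (fun ω => v ω i) = fun ω => ∑ k, C i k * N ω k := funext fun ω => hvi ω i
    rw [this]
    exact memLp_finset_sum _ (fun k _ => (hN2 k).const_mul (C i k))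
  -- norms as sums
  have hnorm : ∀ y : EuclideanSpace ℝ (Fin d), ‖y‖ ^ 2 = ∑ i, y i * y i := by
    intro y
    rw [EuclideanSpace.norm_sq_eq]
    simp only [Real.norm_eq_abs, sq, abs_mul_abs_self]
  have hinner : ∀ ω, (inner ℝ (N ω) (v ω) : ℝ) = ∑ i, N ω i * v ω i := by
    intro ω
    simp [PiLp.inner_apply, RCLike.inner_apply, mul_comm]
  -- integrability
  have hintN : Integrable (fun ω => ‖N ω‖ ^ 2) P := by
    have : (fun ω => ‖N ω‖ ^ 2) = fun ω => ∑ i, N ω i * N ω i := funext fun ω => hnorm _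
    rw [this]
    exact integrable_finset_sum _ (fun i _ => aux_int_mul (hN2 i) (hN2 i))
  have hintv : Integrable (fun ω => ‖v ω‖ ^ 2) P := by
    have : (fun ω => ‖v ω‖ ^ 2) = fun ω => ∑ i, v ω i * v ω i := funext fun ω => hnorm _
    rw [this]
    exact integrable_finset_sum _ (fun i _ => aux_int_mul (hv2 i) (hv2 i))
  have hintinner : Integrable (fun ω => (inner ℝ (N ω) (v ω) : ℝ)) P := by
    have : (fun ω => (inner ℝ (N ω) (v ω) : ℝ)) = fun ω => ∑ i, N ω i * v ω i :=
      funext fun ω => hinner ω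
    rw [this]
    exact integrable_finset_sum _ (fun i _ => aux_int_mul (hN2 i) (hv2 i))
  -- the cross term vanishes
  have hcross : ∫ ω, (inner ℝ (N ω) (v ω) : ℝ) ∂P = 0 := by
    have h1 : ∀ ω, (inner ℝ (N ω) (v ω) : ℝ) = ∑ i, ∑ k, C i k * (N ω i * N ω k) := by
      intro ω
      rw [hinner ω]
      refine Finset.sum_congr rfl fun i _ => ?_
      rw [hvi ω i, Finset.mul_sum]
      exact Finset.sum_congr rfl fun k _ => by ring
    calc ∫ ω, (inner ℝ (N ω) (v ω) : ℝ) ∂P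
        = ∫ ω, ∑ i, ∑ k, C i k * (N ω i * N ω k) ∂P := by
          exact integral_congr_ae (Filter.Eventually.of_forall h1)
      _ = ∑ i, ∫ ω, ∑ k, C i k * (N ω i * N ω k) ∂P := by
          refine integral_finset_sum _ fun i _ => ?_
          exact integrable_finset_sum _
            (fun k _ => (aux_int_mul (hN2 i) (hN2 k)).const_mul (C i k))
      _ = ∑ i, ∑ k, ∫ ω, C i k * (N ω i * N ω k) ∂P := by
          refine Finset.sum_congr rfl fun i _ => ?_
          exact integral_finset_sum _
            (fun k _ => (aux_int_mul (hN2 i) (hN2 k)).const_mul (C i k))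
      _ = 0 := by
          refine Finset.sum_eq_zero fun i _ => Finset.sum_eq_zero fun k _ => ?_
          rw [integral_const_mul]
          rcases eq_or_ne i k with h | h
          · rw [h, hCzero k k (lt_irrefl k), zero_mul]
          · rw [hNuncorr i k h, mul_zero]
  -- assemble
  have hfinal : ∀ ω, ‖x ω - e.symm (W.transpose.mulVec (e (x ω)))‖ ^ 2
      = ‖N ω‖ ^ 2 + (2 * (inner ℝ (N ω) (v ω) : ℝ) + ‖v ω‖ ^ 2) := by
    intro ω
    rw [key ω, norm_add_sq_real]
    ring
  calc ∫ ω, ‖x ω - e.symm (W.transpose.mulVec (e (x ω)))‖ ^ 2 ∂P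
      = ∫ ω, (‖N ω‖ ^ 2 + (2 * (inner ℝ (N ω) (v ω) : ℝ) + ‖v ω‖ ^ 2)) ∂P :=
        integral_congr_ae (Filter.Eventually.of_forall hfinal)
    _ = (∫ ω, ‖N ω‖ ^ 2 ∂P)
        + ∫ ω, (2 * (inner ℝ (N ω) (v ω) : ℝ) + ‖v ω‖ ^ 2) ∂P :=
        integral_add hintN ((hintinner.const_mul 2).add hintv)
    _ = (∫ ω, ‖N ω‖ ^ 2 ∂P)
        + (2 * ∫ ω, (inner ℝ (N ω) (v ω) : ℝ) ∂P + ∫ ω, ‖v ω‖ ^ 2 ∂P) := by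
        rw [integral_add (hintinner.const_mul 2) hintv, integral_const_mul]
    _ = (∫ ω, ‖N ω‖ ^ 2 ∂P) + ∫ ω, ‖v ω‖ ^ 2 ∂P := by
        rw [hcross]; ring
    _ = (∫ ω, ‖N ω‖ ^ 2 ∂P)
        + ∫ ω, ‖e.symm (M.transpose.mulVec (e (x ω)))‖ ^ 2 ∂P := by
        simp only [hv]
end

section
/- In the linear SEM setup, for every strictly upper triangular matrix W : Matrix (Fin d) (Fin d) ℝ (W i j = 0 unless i < j), F(W⋆) ≤ F(W); i.e. the true matrix W⋆ minimizes the population least-squares loss over all matrices that are strictly upper triangular in the true topological ordering. -/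
open MeasureTheory Finset Matrix
open scoped ENNReal

section SemAux
variable {d : ℕ} {Ω : Type*} [MeasurableSpace Ω] (P : Measure Ω)

lemma sem_norm_sq (v : Fin d → ℝ) :
    ‖(WithLp.equiv 2 (Fin d → ℝ)).symm v‖ ^ 2 = ∑ i, (v i) ^ 2 := by
  rw [EuclideanSpace.norm_eq, Real.sq_sqrt (by positivity)]
  simp [PiLp.toLp_apply, Real.norm_eq_abs, sq_abs]

lemma sem_integral_eq (N : Ω → EuclideanSpace ℝ (Fin d))
    (hN2 : ∀ i, MemLp (fun ω => N ω i) 2 P)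
    (hNuncorr : ∀ i j, i ≠ j → ∫ ω, N ω i * N ω j ∂P = 0)
    (M : Matrix (Fin d) (Fin d) ℝ) :
    ∫ ω, ‖(WithLp.equiv 2 (Fin d → ℝ)).symm (M.mulVec (N ω))‖ ^ 2 ∂P
      = ∑ i, ∑ j, (M i j) ^ 2 * ∫ ω, N ω j * N ω j ∂P := by
  have hint : ∀ j k : Fin d, Integrable (fun ω => N ω j * N ω k) P := by
    intro j k
    have hpqr : (1:ℝ≥0∞)/1 = 1/2 + 1/2 := by
      rw [one_div_one, ENNReal.add_halves]
    have := MemLp.smul (φ := fun ω => N ω j) (r := 1) (hN2 k) (hN2 j)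
    exact memLp_one_iff_integrable.mp this
  have h1 : ∀ ω, ‖(WithLp.equiv 2 (Fin d → ℝ)).symm (M.mulVec (N ω))‖ ^ 2
      = ∑ i, ∑ j, ∑ k, (M i j * M i k) * (N ω j * N ω k) := by
    intro ω
    rw [sem_norm_sq]
    refine Finset.sum_congr rfl fun i _ => ?_
    rw [Matrix.mulVec, dotProduct, sq, Finset.sum_mul_sum]
    refine Finset.sum_congr rfl fun j _ => Finset.sum_congr rfl fun k _ => by ring
  simp_rw [h1]
  rw [integral_finset_sum _ (fun i _ => integrable_finset_sum _ fun j _ =>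
    integrable_finset_sum _ fun k _ => (hint j k).const_mul _)]
  refine Finset.sum_congr rfl fun i _ => ?_
  rw [integral_finset_sum _ (fun j _ => integrable_finset_sum _ fun k _ =>
    (hint j k).const_mul _)]
  refine Finset.sum_congr rfl fun j _ => ?_
  rw [integral_finset_sum _ (fun k _ => (hint j k).const_mul _)]
  rw [Finset.sum_eq_single j]
  · rw [integral_const_mul]; ring
  · intro k _ hk
    rw [integral_const_mul, hNuncorr j k (Ne.symm hk), mul_zero]
  · intro h; exact absurd (Finset.mem_univ j) h

end SemAux

set_option maxHeartbeats 1000000 in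
/-- In the linear SEM model, the true matrix `W⋆` minimizes the population least-squares
loss `F(W) = (1/2) E[‖x − Wᵀ x‖²]` over all matrices strictly upper triangular in the true
topological ordering. -/
theorem sem_true_matrix_minimizes {d : ℕ} {Ω : Type*} [MeasurableSpace Ω]
    (P : Measure Ω) [IsProbabilityMeasure P]
    (N : Ω → EuclideanSpace ℝ (Fin d))
    (hN2 : ∀ i, MemLp (fun ω => N ω i) 2 P)
    (hNmean : ∀ i, ∫ ω, N ω i ∂P = 0)
    (hNuncorr : ∀ i j, i ≠ j → ∫ ω, N ω i * N ω j ∂P = 0)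
    (Wstar : Matrix (Fin d) (Fin d) ℝ)
    (hWstar : ∀ i j : Fin d, ¬ i < j → Wstar i j = 0)
    (x : Ω → EuclideanSpace ℝ (Fin d))
    (hx : ∀ ω, x ω = (WithLp.equiv 2 (Fin d → ℝ)).symm
      ((1 - Wstar.transpose)⁻¹.mulVec (WithLp.equiv 2 (Fin d → ℝ) (N ω))))
    (W : Matrix (Fin d) (Fin d) ℝ)
    (hW : ∀ i j : Fin d, ¬ i < j → W i j = 0) :
    (1 / 2) * ∫ ω, ‖x ω - (WithLp.equiv 2 (Fin d → ℝ)).symm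
        (Wstar.transpose.mulVec (WithLp.equiv 2 (Fin d → ℝ) (x ω)))‖ ^ 2 ∂P
      ≤ (1 / 2) * ∫ ω, ‖x ω - (WithLp.equiv 2 (Fin d → ℝ)).symm
        (W.transpose.mulVec (WithLp.equiv 2 (Fin d → ℝ) (x ω)))‖ ^ 2 ∂P := by
  set A : Matrix (Fin d) (Fin d) ℝ := 1 - Wstar.transpose with hA
  -- `A` is lower triangular
  have hAtri : A.BlockTriangular OrderDual.toDual := by
    intro i j hij
    have hij' : (i : Fin d) < j := hij
    simp [hA, Matrix.sub_apply, Matrix.one_apply_ne (ne_of_lt hij'),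
      Matrix.transpose_apply, hWstar j i (not_lt_of_gt hij')]
  have hdet : A.det = 1 := by
    rw [Matrix.det_of_lowerTriangular A hAtri]
    refine Finset.prod_eq_one fun i _ => ?_
    simp [hA, Matrix.sub_apply, Matrix.one_apply_eq, Matrix.transpose_apply,
      hWstar i i (lt_irrefl i)]
  have hunit : IsUnit A.det := hdet ▸ isUnit_one
  have hAmul : A * A⁻¹ = 1 := Matrix.mul_nonsing_inv A hunit
  haveI : Invertible A := A.invertibleOfIsUnitDet hunit
  have hAinvtri : A⁻¹.BlockTriangular OrderDual.toDual :=
    Matrix.blockTriangular_inv_of_blockTriangular hAtri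
  -- pointwise identity for a general matrix W'
  have hpt : ∀ (W' : Matrix (Fin d) (Fin d) ℝ) (ω : Ω),
      x ω - (WithLp.equiv 2 (Fin d → ℝ)).symm
          (W'.transpose.mulVec (WithLp.equiv 2 (Fin d → ℝ) (x ω)))
        = (WithLp.equiv 2 (Fin d → ℝ)).symm
          (((1 - W'.transpose) * A⁻¹).mulVec (WithLp.equiv 2 (Fin d → ℝ) (N ω))) := by
    intro W' ω
    rw [hx ω, Equiv.apply_symm_apply, Matrix.mulVec_mulVec, WithLp.equiv_symm_apply, ← WithLp.toLp_sub,
      ← Matrix.sub_mulVec]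
    congr 2
    rw [sub_mul, one_mul]
  have hc : ∀ j : Fin d, 0 ≤ ∫ ω, N ω j * N ω j ∂P :=
    fun j => integral_nonneg fun ω => mul_self_nonneg _
  -- rewrite the two integrals
  have hInt : ∀ (W' : Matrix (Fin d) (Fin d) ℝ),
      ∫ ω, ‖x ω - (WithLp.equiv 2 (Fin d → ℝ)).symm
          (W'.transpose.mulVec (WithLp.equiv 2 (Fin d → ℝ) (x ω)))‖ ^ 2 ∂P
        = ∑ i, ∑ j, (((1 - W'.transpose) * A⁻¹) i j) ^ 2 * ∫ ω, N ω j * N ω j ∂P := by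
    intro W'
    rw [show (fun ω => ‖x ω - (WithLp.equiv 2 (Fin d → ℝ)).symm
          (W'.transpose.mulVec (WithLp.equiv 2 (Fin d → ℝ) (x ω)))‖ ^ 2)
        = fun ω => ‖(WithLp.equiv 2 (Fin d → ℝ)).symm
          (((1 - W'.transpose) * A⁻¹).mulVec (WithLp.equiv 2 (Fin d → ℝ) (N ω)))‖ ^ 2
      from funext fun ω => by rw [hpt W' ω]]
    have := sem_integral_eq P N
      (fun i => hN2 i) hNuncorr ((1 - W'.transpose) * A⁻¹)
    exact this
  rw [hInt Wstar, hInt W]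
  -- the Wstar matrix is the identity
  have hMstar : (1 - Wstar.transpose) * A⁻¹ = 1 := by rw [← hA]; exact hAmul
  rw [hMstar]
  -- diagonal of the W matrix is 1
  set MW : Matrix (Fin d) (Fin d) ℝ := (1 - W.transpose) * A⁻¹ with hMW
  have hMdecomp : MW = 1 + (Wstar.transpose - W.transpose) * A⁻¹ := by
    rw [hMW, show (1 - W.transpose : Matrix (Fin d) (Fin d) ℝ)
      = A + (Wstar.transpose - W.transpose) from by rw [hA]; abel, add_mul, hAmul]
  have hMdiag : ∀ i : Fin d, MW i i = 1 := by
    intro i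
    rw [hMdecomp, Matrix.add_apply, Matrix.one_apply_eq, Matrix.mul_apply]
    have : ∀ k ∈ Finset.univ, (Wstar.transpose - W.transpose) i k * A⁻¹ k i = 0 := by
      intro k _
      by_cases hk : k < i
      · rw [hAinvtri (show OrderDual.toDual i < OrderDual.toDual k from hk), mul_zero]
      · rw [Matrix.sub_apply, Matrix.transpose_apply, Matrix.transpose_apply,
          hWstar k i hk, hW k i hk, sub_zero, zero_mul]
    rw [Finset.sum_eq_zero this, add_zero]
  -- final inequality
  have hineq : ∑ i, ∑ j, ((1 : Matrix (Fin d) (Fin d) ℝ) i j) ^ 2 * (∫ ω, N ω j * N ω j ∂P)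
      ≤ ∑ i, ∑ j, (MW i j) ^ 2 * ∫ ω, N ω j * N ω j ∂P := by
    refine Finset.sum_le_sum fun i _ => ?_
    have h1 : ∑ j, ((1 : Matrix (Fin d) (Fin d) ℝ) i j) ^ 2 * (∫ ω, N ω j * N ω j ∂P)
        = ∫ ω, N ω i * N ω i ∂P := by
      rw [Finset.sum_eq_single i]
      · rw [Matrix.one_apply_eq, one_pow, one_mul]
      · intro j _ hj
        rw [Matrix.one_apply_ne (Ne.symm hj), zero_pow two_ne_zero, zero_mul]
      · intro h; exact absurd (Finset.mem_univ i) h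
    rw [h1]
    calc ∫ ω, N ω i * N ω i ∂P = (MW i i) ^ 2 * ∫ ω, N ω i * N ω i ∂P := by
          rw [hMdiag i, one_pow, one_mul]
      _ ≤ ∑ j, (MW i j) ^ 2 * ∫ ω, N ω j * N ω j ∂P :=
          Finset.single_le_sum (f := fun j => (MW i j) ^ 2 * ∫ ω, N ω j * N ω j ∂P)
            (fun j _ => mul_nonneg (sq_nonneg _) (hc j))
            (Finset.mem_univ i)
  have h2 : (0:ℝ) ≤ 1/2 := by norm_num
  exact mul_le_mul_of_nonneg_left hineq h2
end

section
/- In the linear SEM setup, assume in addition that the covariance matrix Σ : Matrix (Fin d) (Fin d) ℝ defined by Σ i j := E[(x i) * (x j)] is positive definite. Then for every strictly upper triangular matrix W (W i j = 0 unless i < j), F(W) = F(W⋆) if and only if W = W⋆; in particular W⋆ is the unique minimizer of F over strictly upper triangular matrices. -/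
open MeasureTheory

lemma sem_int_mul {Ω : Type*} [MeasurableSpace Ω] {P : Measure Ω} {f g : Ω → ℝ}
    (hf : MemLp f 2 P) (hg : MemLp g 2 P) : Integrable (fun ω => f ω * g ω) P := by
  have h : MemLp (f • g) 1 P := hg.smul hf (hpqr := ⟨by norm_num [ENNReal.inv_two_add_inv_two]⟩)
  exact memLp_one_iff_integrable.mp h

lemma sem_integral_comb {Ω : Type*} [MeasurableSpace Ω] (P : Measure Ω)
    {d : ℕ} (f : Fin d → Ω → ℝ) (hf : ∀ i, MemLp (f i) 2 P) (a b : Fin d → ℝ) :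
    ∫ ω, (∑ j, a j * f j ω) * (∑ k, b k * f k ω) ∂P
      = ∑ j, ∑ k, a j * b k * ∫ ω, f j ω * f k ω ∂P := by
  have hint : ∀ j k : Fin d, Integrable (fun ω => a j * b k * (f j ω * f k ω)) P :=
    fun j k => (sem_int_mul (hf j) (hf k)).const_mul _
  calc ∫ ω, (∑ j, a j * f j ω) * (∑ k, b k * f k ω) ∂P
      = ∫ ω, ∑ j, ∑ k, a j * b k * (f j ω * f k ω) ∂P := by
        congr 1; funext ω
        rw [Finset.sum_mul_sum]
        exact Finset.sum_congr rfl fun j _ => Finset.sum_congr rfl fun k _ => by ring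
    _ = ∑ j, ∑ k, ∫ ω, a j * b k * (f j ω * f k ω) ∂P := by
        rw [integral_finset_sum _ fun j _ => integrable_finset_sum _ fun k _ => hint j k]
        exact Finset.sum_congr rfl fun j _ => integral_finset_sum _ fun k _ => hint j k
    _ = ∑ j, ∑ k, a j * b k * ∫ ω, f j ω * f k ω ∂P := by
        simp_rw [integral_const_mul]

/-- In the linear SEM model with positive definite covariance `Σ i j = E[x i * x j]`, the
true matrix `W⋆` is the unique minimizer of the population least-squares loss over matrices
strictly upper triangular in the true topological ordering: `F(W) = F(W⋆) ↔ W = W⋆`. -/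
theorem sem_unique_minimizer {d : ℕ} {Ω : Type*} [MeasurableSpace Ω]
    (P : Measure Ω) [IsProbabilityMeasure P]
    (N : Ω → EuclideanSpace ℝ (Fin d))
    (hN2 : ∀ i, MemLp (fun ω => N ω i) 2 P)
    (hNmean : ∀ i, ∫ ω, N ω i ∂P = 0)
    (hNuncorr : ∀ i j, i ≠ j → ∫ ω, N ω i * N ω j ∂P = 0)
    (Wstar : Matrix (Fin d) (Fin d) ℝ)
    (hWstar : ∀ i j : Fin d, ¬ i < j → Wstar i j = 0)
    (x : Ω → EuclideanSpace ℝ (Fin d))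
    (hx : ∀ ω, x ω = (WithLp.equiv 2 (Fin d → ℝ)).symm
      ((1 - Wstar.transpose)⁻¹.mulVec (WithLp.equiv 2 (Fin d → ℝ) (N ω))))
    (hSigma : (Matrix.of fun i j : Fin d => ∫ ω, x ω i * x ω j ∂P).PosDef)
    (W : Matrix (Fin d) (Fin d) ℝ)
    (hW : ∀ i j : Fin d, ¬ i < j → W i j = 0) :
    (1 / 2) * ∫ ω, ‖x ω - (WithLp.equiv 2 (Fin d → ℝ)).symm
        (W.transpose.mulVec (WithLp.equiv 2 (Fin d → ℝ) (x ω)))‖ ^ 2 ∂P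
      = (1 / 2) * ∫ ω, ‖x ω - (WithLp.equiv 2 (Fin d → ℝ)).symm
        (Wstar.transpose.mulVec (WithLp.equiv 2 (Fin d → ℝ) (x ω)))‖ ^ 2 ∂P
    ↔ W = Wstar := by
  classical
  set M : Matrix (Fin d) (Fin d) ℝ := (1 - Wstar.transpose)⁻¹ with hMdef
  -- determinant / invertibility facts
  have hWtri : (1 - Wstar).BlockTriangular id := by
    intro i j hij
    have h1 : ¬ i < j := not_lt.mpr (le_of_lt hij)
    have h2 : i ≠ j := ne_of_gt hij
    simp [Matrix.one_apply, Matrix.sub_apply, hWstar i j h1, h2]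
  have htrans : (1 - Wstar.transpose) = (1 - Wstar).transpose := by
    simp [Matrix.transpose_sub]
  have hdet1 : (1 - Wstar).det = 1 := by
    rw [Matrix.det_of_upperTriangular hWtri]
    have h2 : ∀ i : Fin d, (1 - Wstar) i i = 1 := by
      intro i
      simp [Matrix.sub_apply, Matrix.one_apply, hWstar i i (lt_irrefl i)]
    simp [h2]
  have hdet : (1 - Wstar.transpose).det = 1 := by
    rw [htrans, Matrix.det_transpose, hdet1]
  have hunit : IsUnit (1 - Wstar.transpose).det := by rw [hdet]; exact isUnit_one
  have hAM : (1 - Wstar.transpose) * M = 1 := Matrix.mul_nonsing_inv _ hunit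
  have hMA : M * (1 - Wstar.transpose) = 1 := Matrix.nonsing_inv_mul _ hunit
  -- M is lower triangular
  have hMlow : ∀ k j : Fin d, k < j → M k j = 0 := by
    have hinv : Invertible (1 - Wstar) :=
      (1 - Wstar).invertibleOfIsUnitDet (by rw [hdet1]; exact isUnit_one)
    have hinvtri : ((1 - Wstar)⁻¹).BlockTriangular id :=
      Matrix.blockTriangular_inv_of_blockTriangular hWtri
    intro k j hkj
    have hMt : M = ((1 - Wstar)⁻¹).transpose := by
      rw [hMdef, htrans, ← Matrix.transpose_nonsing_inv]
    rw [hMt, Matrix.transpose_apply]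
    exact hinvtri hkj
  -- coordinates of x
  have hxcoord : ∀ ω (k : Fin d), x ω k = ∑ p, M k p * N ω p := by
    intro ω k
    rw [hx]
    simp [Matrix.mulVec, dotProduct]
  -- second moments of N
  set c : Fin d → ℝ := fun j => ∫ ω, N ω j * N ω j ∂P with hcdef
  have hcomb : ∀ a b : Fin d → ℝ,
      ∫ ω, (∑ j, a j * N ω j) * (∑ k, b k * N ω k) ∂P = ∑ j, a j * b j * c j := by
    intro a b
    rw [sem_integral_comb P (fun i ω => N ω i) hN2 a b]
    refine Finset.sum_congr rfl fun j _ => ?_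
    rw [Finset.sum_eq_single j]
    · intro k _ hk
      rw [hNuncorr j k (Ne.symm hk), mul_zero]
    · intro h; exact absurd (Finset.mem_univ j) h
  -- the loss as a quadratic form
  have hloss : ∀ V : Matrix (Fin d) (Fin d) ℝ,
      ∫ ω, ‖x ω - (WithLp.equiv 2 (Fin d → ℝ)).symm
        (V.transpose.mulVec (WithLp.equiv 2 (Fin d → ℝ) (x ω)))‖ ^ 2 ∂P
      = ∑ i, ∑ j, (((1 - V.transpose) * M) i j) ^ 2 * c j := by
    intro V
    set B := (1 - V.transpose) * M with hB
    have hy : ∀ ω (i : Fin d),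
        (x ω - (WithLp.equiv 2 (Fin d → ℝ)).symm
          (V.transpose.mulVec (WithLp.equiv 2 (Fin d → ℝ) (x ω)))) i
        = ∑ j, B i j * N ω j := by
      intro ω i
      have hxv : (fun k => x ω k) = M.mulVec (fun p => N ω p) := by
        funext k
        rw [hxcoord ω k]
        simp [Matrix.mulVec, dotProduct]
      have h1 : (WithLp.equiv 2 (Fin d → ℝ)) (x ω) = fun k => x ω k := rfl
      calc (x ω - (WithLp.equiv 2 (Fin d → ℝ)).symm
            (V.transpose.mulVec (WithLp.equiv 2 (Fin d → ℝ) (x ω)))) i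
          = x ω i - (V.transpose.mulVec (fun k => x ω k)) i := by
            simp [h1, WithLp.equiv_symm_apply, PiLp.sub_apply]
        _ = ((1 - V.transpose).mulVec (fun k => x ω k)) i := by
            rw [Matrix.sub_mulVec, Matrix.one_mulVec]; simp
        _ = (B.mulVec fun p => N ω p) i := by
            rw [hxv, Matrix.mulVec_mulVec]
        _ = ∑ j, B i j * N ω j := by
            simp [Matrix.mulVec, dotProduct]
    have hpt : ∀ ω, ‖x ω - (WithLp.equiv 2 (Fin d → ℝ)).symm
          (V.transpose.mulVec (WithLp.equiv 2 (Fin d → ℝ) (x ω)))‖ ^ 2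
        = ∑ i, (∑ j, B i j * N ω j) ^ 2 := by
      intro ω
      rw [EuclideanSpace.norm_eq, Real.sq_sqrt (Finset.sum_nonneg fun i _ => sq_nonneg _)]
      exact Finset.sum_congr rfl fun i _ => by rw [Real.norm_eq_abs, sq_abs, hy ω i]
    have hmem : ∀ i : Fin d, MemLp (fun ω => ∑ j, B i j * N ω j) 2 P := by
      intro i
      exact memLp_finset_sum Finset.univ fun j _ => (hN2 j).const_mul (B i j)
    have hint : ∀ i : Fin d, Integrable (fun ω => (∑ j, B i j * N ω j) ^ 2) P :=
      fun i => (hmem i).integrable_sq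
    calc ∫ ω, ‖x ω - (WithLp.equiv 2 (Fin d → ℝ)).symm
          (V.transpose.mulVec (WithLp.equiv 2 (Fin d → ℝ) (x ω)))‖ ^ 2 ∂P
        = ∫ ω, ∑ i, (∑ j, B i j * N ω j) ^ 2 ∂P := by simp only [hpt]
      _ = ∑ i, ∫ ω, (∑ j, B i j * N ω j) ^ 2 ∂P :=
          integral_finset_sum _ fun i _ => hint i
      _ = ∑ i, ∑ j, (B i j) ^ 2 * c j := by
          refine Finset.sum_congr rfl fun i _ => ?_
          calc ∫ ω, (∑ j, B i j * N ω j) ^ 2 ∂P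
              = ∫ ω, (∑ j, B i j * N ω j) * (∑ j, B i j * N ω j) ∂P := by
                simp only [sq]
            _ = ∑ j, B i j * B i j * c j := hcomb _ _
            _ = ∑ j, (B i j) ^ 2 * c j :=
                Finset.sum_congr rfl fun j _ => by ring
  -- positivity of the c j
  have hxmem : ∀ k : Fin d, MemLp (fun ω => x ω k) 2 P := by
    intro k
    have h := memLp_finset_sum (μ := P) Finset.univ
      (f := fun p ω => M k p * N ω p) (fun p _ => (hN2 p).const_mul (M k p))
    have heq : (fun ω => x ω k) = fun ω => ∑ p, M k p * N ω p :=
      funext fun ω => hxcoord ω k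
    rw [heq]
    exact h
  have hcpos : ∀ j, 0 < c j := by
    intro j
    set v : Fin d → ℝ := fun k => (1 - Wstar.transpose) j k with hv
    have hvne : v ≠ 0 := by
      intro h
      have h0 := congrFun h j
      simp [hv, Matrix.sub_apply, Matrix.one_apply, Matrix.transpose_apply,
        hWstar j j (lt_irrefl j)] at h0
    have hq := hSigma.dotProduct_mulVec_pos hvne
    have hNx : ∀ ω, (∑ k, v k * x ω k) = N ω j := by
      intro ω
      have hxv : (fun k => x ω k) = M.mulVec (fun p => N ω p) := by
        funext k
        rw [hxcoord ω k]
        simp [Matrix.mulVec, dotProduct]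
      calc ∑ k, v k * x ω k
          = ((1 - Wstar.transpose).mulVec fun k => x ω k) j := by
            simp [Matrix.mulVec, dotProduct, hv]
        _ = N ω j := by
            rw [hxv, Matrix.mulVec_mulVec, hAM, Matrix.one_mulVec]
    have hform : dotProduct (star v)
        ((Matrix.of fun k l : Fin d => ∫ ω, x ω k * x ω l ∂P).mulVec v) = c j := by
      have hstar : star v = v := by funext k; simp
      have h1 := sem_integral_comb P (fun k ω => x ω k) hxmem v v
      calc dotProduct (star v)
            ((Matrix.of fun k l : Fin d => ∫ ω, x ω k * x ω l ∂P).mulVec v)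
          = ∑ k, ∑ l, v k * v l * ∫ ω, x ω k * x ω l ∂P := by
            rw [hstar]
            simp only [dotProduct, Matrix.mulVec, Matrix.of_apply, Finset.mul_sum]
            exact Finset.sum_congr rfl fun k _ => Finset.sum_congr rfl fun l _ => by ring
        _ = ∫ ω, (∑ k, v k * x ω k) * (∑ l, v l * x ω l) ∂P := h1.symm
        _ = ∫ ω, N ω j * N ω j ∂P := by simp only [hNx]
        _ = c j := rfl
    rw [hform] at hq
    exact hq
  -- rewrite the two integrals
  rw [hloss W, hloss Wstar, hAM]
  have hone : ∑ i, ∑ j, ((1 : Matrix (Fin d) (Fin d) ℝ) i j) ^ 2 * c j = ∑ j, c j := by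
    rw [Finset.sum_comm]
    refine Finset.sum_congr rfl fun j _ => ?_
    rw [Finset.sum_eq_single j]
    · simp [Matrix.one_apply_eq]
    · intro i _ hij
      simp [Matrix.one_apply_ne hij]
    · intro h; exact absurd (Finset.mem_univ j) h
  set L : Matrix (Fin d) (Fin d) ℝ := (Wstar.transpose - W.transpose) * M with hLdef
  have hBL : (1 - W.transpose) * M = 1 + L := by
    have h3 : (1 - Wstar.transpose) + (Wstar.transpose - W.transpose) = 1 - W.transpose := by
      abel
    rw [← h3, add_mul, hAM, ← hLdef]
  have hLdiag : ∀ j : Fin d, L j j = 0 := by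
    intro j
    rw [hLdef, Matrix.mul_apply]
    refine Finset.sum_eq_zero fun k _ => ?_
    rcases lt_or_ge k j with h | h
    · rw [hMlow k j h, mul_zero]
    · have h4 : (Wstar.transpose - W.transpose) j k = 0 := by
        simp [Matrix.sub_apply, Matrix.transpose_apply,
          hWstar k j (not_lt.mpr h), hW k j (not_lt.mpr h)]
      rw [h4, zero_mul]
  have hsplit : ∑ i, ∑ j, (((1 - W.transpose) * M) i j) ^ 2 * c j
      = (∑ j, c j) + ∑ i, ∑ j, (L i j) ^ 2 * c j := by
    rw [← hone, ← Finset.sum_add_distrib]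
    refine Finset.sum_congr rfl fun i _ => ?_
    rw [← Finset.sum_add_distrib]
    refine Finset.sum_congr rfl fun j _ => ?_
    rw [hBL, Matrix.add_apply]
    by_cases hij : i = j
    · subst hij; rw [hLdiag i]; ring
    · rw [Matrix.one_apply_ne hij]; ring
  rw [hsplit, hone]
  constructor
  · intro h
    have hQ : ∑ i, ∑ j, (L i j) ^ 2 * c j = 0 := by
      have h5 := mul_left_cancel₀ (by norm_num : (1 / 2 : ℝ) ≠ 0) h
      linarith
    have hL0 : ∀ i j : Fin d, L i j = 0 := by
      intro i j
      have houter := (Finset.sum_eq_zero_iff_of_nonneg fun i _ =>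
        Finset.sum_nonneg fun j _ => mul_nonneg (sq_nonneg _) (hcpos j).le).mp hQ i
        (Finset.mem_univ i)
      have hinner := (Finset.sum_eq_zero_iff_of_nonneg fun j _ =>
        mul_nonneg (sq_nonneg _) (hcpos j).le).mp houter j (Finset.mem_univ j)
      have h6 := (mul_eq_zero.mp hinner).resolve_right (ne_of_gt (hcpos j))
      exact pow_eq_zero_iff (two_ne_zero) |>.mp h6
    have hLz : L = 0 := by
      ext i j; exact hL0 i j
    have hD : Wstar.transpose - W.transpose = 0 := by
      calc Wstar.transpose - W.transpose
          = (Wstar.transpose - W.transpose) * (M * (1 - Wstar.transpose)) := by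
            rw [hMA, mul_one]
        _ = L * (1 - Wstar.transpose) := by rw [hLdef, Matrix.mul_assoc]
        _ = 0 := by rw [hLz, Matrix.zero_mul]
    have h7 : Wstar.transpose = W.transpose := sub_eq_zero.mp hD
    have h8 := congrArg Matrix.transpose h7
    simpa [Matrix.transpose_transpose] using h8.symm
  · intro h
    subst h
    have hL0 : L = 0 := by rw [hLdef]; simp
    simp [hL0]
end

section
/- Let E be a real inner product space, f : E → ℝ convex and L-smooth (L > 0), and x⋆ a minimizer of f. Starting from any x₀ ∈ E, define the gradient descent iterates x_{t+1} := x_t − (1/L) • ∇f x_t. Then for every T ≥ 1, f(x_T) − f(x⋆) ≤ L * ‖x₀ − x⋆‖² / (2 * T). -/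
open RealInnerProductSpace

section Aux
variable {E : Type*} [NormedAddCommGroup E] [InnerProductSpace ℝ E]
  (f : E → ℝ) (f' : E → E)

lemma gd_path_hasDerivAt (hderiv : ∀ x : E, HasFDerivAt f (innerSL ℝ (f' x)) x)
    (u v : E) (t : ℝ) :
    HasDerivAt (fun s : ℝ => f (s • (v - u) + u)) ⟪f' (t • (v - u) + u), v - u⟫ t := by
  have hφ : HasDerivAt (fun s : ℝ => s • (v - u) + u) (v - u) t := by
    simpa using ((hasDerivAt_id t).smul_const (v - u)).add_const u
  simpa [Function.comp_def] using (hderiv (t • (v - u) + u)).comp_hasDerivAt t hφ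

/-- Convexity gradient inequality. -/
lemma gd_convex_ineq (hconv : ConvexOn ℝ (Set.univ : Set E) f)
    (hderiv : ∀ x : E, HasFDerivAt f (innerSL ℝ (f' x)) x) (u v : E) :
    f u + ⟪f' u, v - u⟫ ≤ f v := by
  set g : ℝ → ℝ := fun s => f (s • (v - u) + u) with hg
  have hgconv : ConvexOn ℝ (Set.univ : Set ℝ) g := by
    have := hconv.comp_affineMap (AffineMap.lineMap u v : ℝ →ᵃ[ℝ] E)
    simpa [g, AffineMap.lineMap_apply, Function.comp_def, vsub_eq_sub, vadd_eq_add] using this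
  have h := hgconv.le_slope_of_hasDerivAt (Set.mem_univ (0:ℝ)) (Set.mem_univ (1:ℝ))
    one_pos (by simpa using gd_path_hasDerivAt f f' hderiv u v 0)
  have hs : slope g 0 1 = f v - f u := by
    simp [slope_def_field, g]
  rw [hs] at h
  linarith

/-- Descent lemma. -/
lemma gd_descent {L : ℝ} (hL : 0 < L)
    (hderiv : ∀ x : E, HasFDerivAt f (innerSL ℝ (f' x)) x)
    (hlip : ∀ x y : E, ‖f' x - f' y‖ ≤ L * ‖x - y‖) (u v : E) :
    f v ≤ f u + ⟪f' u, v - u⟫ + L / 2 * ‖v - u‖ ^ 2 := by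
  set g' : ℝ → ℝ := fun t => ⟪f' (t • (v - u) + u), v - u⟫ with hg'
  have hf'lip : LipschitzWith (Real.toNNReal L) f' := by
    apply LipschitzWith.of_dist_le_mul
    intro a b
    rw [dist_eq_norm]
    calc ‖f' a - f' b‖ ≤ L * ‖a - b‖ := hlip a b
      _ = (Real.toNNReal L) * dist a b := by
          rw [dist_eq_norm, Real.coe_toNNReal _ hL.le]
  have hcont : Continuous g' := by
    apply Continuous.inner
    · exact hf'lip.continuous.comp (by continuity)
    · exact continuous_const
  have hftc : ∫ t in (0:ℝ)..1, g' t = f v - f u := by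
    have := intervalIntegral.integral_eq_sub_of_hasDerivAt
      (f := fun s : ℝ => f (s • (v - u) + u)) (f' := g')
      (fun t _ => gd_path_hasDerivAt f f' hderiv u v t)
      (hcont.intervalIntegrable 0 1)
    simpa using this
  have hbound : ∀ t ∈ Set.Icc (0:ℝ) 1,
      g' t ≤ ⟪f' u, v - u⟫ + L * ‖v - u‖ ^ 2 * t := by
    intro t ht
    have h1 : g' t - ⟪f' u, v - u⟫ = ⟪f' (t • (v - u) + u) - f' u, v - u⟫ := by
      rw [inner_sub_left]
    have h2 : ⟪f' (t • (v - u) + u) - f' u, v - u⟫ ≤ L * ‖v - u‖ ^ 2 * t := by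
      calc ⟪f' (t • (v - u) + u) - f' u, v - u⟫
          ≤ ‖f' (t • (v - u) + u) - f' u‖ * ‖v - u‖ := real_inner_le_norm _ _
        _ ≤ (L * ‖t • (v - u) + u - u‖) * ‖v - u‖ := by
            apply mul_le_mul_of_nonneg_right (hlip _ _) (norm_nonneg _)
        _ = L * ‖v - u‖ ^ 2 * t := by
            rw [add_sub_cancel_right, norm_smul, Real.norm_eq_abs, abs_of_nonneg ht.1]
            ring
    linarith
  have hint : ∫ t in (0:ℝ)..1, (⟪f' u, v - u⟫ + L * ‖v - u‖ ^ 2 * t)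
      = ⟪f' u, v - u⟫ + L / 2 * ‖v - u‖ ^ 2 := by
    rw [intervalIntegral.integral_add intervalIntegrable_const
      (show IntervalIntegrable (fun t : ℝ => L * ‖v - u‖ ^ 2 * t) MeasureTheory.volume 0 1 from
        (continuous_const.mul continuous_id').intervalIntegrable 0 1),
      intervalIntegral.integral_const_mul, integral_id]
    simp
    ring
  have hmono := intervalIntegral.integral_mono_on (μ := MeasureTheory.volume) (zero_le_one)
    (hcont.intervalIntegrable 0 1)
    (show IntervalIntegrable (fun t : ℝ => ⟪f' u, v - u⟫ + L * ‖v - u‖ ^ 2 * t) MeasureTheory.volume 0 1 from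
      (continuous_const.add (continuous_const.mul continuous_id')).intervalIntegrable 0 1)
    hbound
  rw [hftc, hint] at hmono
  linarith

end Aux

/-- Gradient descent with step size `1/L` on a convex `L`-smooth function: after `T ≥ 1`
steps, `f(x_T) − f(x⋆) ≤ L ‖x₀ − x⋆‖² / (2T)`. -/
theorem gradient_descent_convergence
    {E : Type*} [NormedAddCommGroup E] [InnerProductSpace ℝ E]
    (f : E → ℝ) (f' : E → E) (L : ℝ) (hL : 0 < L)
    (hconv : ConvexOn ℝ (Set.univ : Set E) f)
    (hderiv : ∀ x : E, HasFDerivAt f (innerSL ℝ (f' x)) x)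
    (hlip : ∀ x y : E, ‖f' x - f' y‖ ≤ L * ‖x - y‖)
    (xstar : E) (hmin : ∀ y : E, f xstar ≤ f y)
    (x : ℕ → E)
    (hsucc : ∀ t : ℕ, x (t + 1) = x t - (1 / L) • f' (x t)) :
    ∀ T : ℕ, 1 ≤ T → f (x T) - f xstar ≤ L * ‖x 0 - xstar‖ ^ 2 / (2 * T) := by
  intro T hT
  have hstep : ∀ t : ℕ, f (x (t + 1)) ≤ f (x t) - 1 / (2 * L) * ‖f' (x t)‖ ^ 2 := by
    intro t
    have h := gd_descent f f' hL hderiv hlip (x t) (x (t + 1))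
    have hdiff : x (t + 1) - x t = -((1 / L) • f' (x t)) := by
      rw [hsucc t]; abel
    rw [hdiff] at h
    have h1 : ⟪f' (x t), -((1 / L) • f' (x t))⟫ = -(1 / L) * ‖f' (x t)‖ ^ 2 := by
      rw [inner_neg_right, real_inner_smul_right, real_inner_self_eq_norm_sq]; ring
    have h2 : ‖-((1 / L) • f' (x t))‖ ^ 2 = (1 / L) ^ 2 * ‖f' (x t)‖ ^ 2 := by
      rw [norm_neg, norm_smul, Real.norm_eq_abs, abs_of_pos (by positivity : (0:ℝ) < 1 / L)]
      ring
    rw [h1, h2] at h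
    have : L / 2 * ((1 / L) ^ 2 * ‖f' (x t)‖ ^ 2) - (1 / L) * ‖f' (x t)‖ ^ 2
        = -(1 / (2 * L) * ‖f' (x t)‖ ^ 2) := by
      field_simp; ring
    linarith
  have hkey : ∀ t : ℕ, f (x (t + 1)) - f xstar
      ≤ L / 2 * (‖x t - xstar‖ ^ 2 - ‖x (t + 1) - xstar‖ ^ 2) := by
    intro t
    have hd := hstep t
    have hc := gd_convex_ineq f f' hconv hderiv (x t) xstar
    have hin : ⟪f' (x t), xstar - x t⟫ = -⟪f' (x t), x t - xstar⟫ := by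
      rw [← inner_neg_right, neg_sub]
    rw [hin] at hc
    have hnorm : ‖x (t + 1) - xstar‖ ^ 2 = ‖x t - xstar‖ ^ 2
        - 2 * ((1 / L) * ⟪f' (x t), x t - xstar⟫) + (1 / L) ^ 2 * ‖f' (x t)‖ ^ 2 := by
      have : x (t + 1) - xstar = (x t - xstar) - (1 / L) • f' (x t) := by
        rw [hsucc t]; abel
      rw [this, @norm_sub_sq_real, real_inner_smul_right, norm_smul, Real.norm_eq_abs,
        abs_of_pos (by positivity : (0:ℝ) < 1 / L), real_inner_comm]
      ring
    have heq : L / 2 * (‖x t - xstar‖ ^ 2 - ‖x (t + 1) - xstar‖ ^ 2)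
        = ⟪f' (x t), x t - xstar⟫ - 1 / (2 * L) * ‖f' (x t)‖ ^ 2 := by
      rw [hnorm]; field_simp; ring
    linarith
  have hmono : ∀ s t : ℕ, s ≤ t → f (x t) ≤ f (x s) := by
    intro s t hst
    have h : Antitone (fun n => f (x n)) := by
      apply antitone_nat_of_succ_le
      intro n
      have := hstep n
      have h0 : 0 ≤ 1 / (2 * L) * ‖f' (x n)‖ ^ 2 := by positivity
      linarith
    exact h hst
  have hsum : ∑ t ∈ Finset.range T, (f (x (t + 1)) - f xstar)
      ≤ L / 2 * ‖x 0 - xstar‖ ^ 2 := by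
    calc ∑ t ∈ Finset.range T, (f (x (t + 1)) - f xstar)
        ≤ ∑ t ∈ Finset.range T,
            (L / 2 * ‖x t - xstar‖ ^ 2 - L / 2 * ‖x (t + 1) - xstar‖ ^ 2) := by
          apply Finset.sum_le_sum
          intro t _
          have := hkey t
          linarith
      _ = L / 2 * ‖x 0 - xstar‖ ^ 2 - L / 2 * ‖x T - xstar‖ ^ 2 :=
          Finset.sum_range_sub' (fun i => L / 2 * ‖x i - xstar‖ ^ 2) T
      _ ≤ L / 2 * ‖x 0 - xstar‖ ^ 2 := by
          have : 0 ≤ L / 2 * ‖x T - xstar‖ ^ 2 := by positivity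
          linarith
  have hTle : (T : ℝ) * (f (x T) - f xstar) ≤ ∑ t ∈ Finset.range T, (f (x (t + 1)) - f xstar) := by
    have h : ∀ t ∈ Finset.range T, f (x T) - f xstar ≤ f (x (t + 1)) - f xstar := by
      intro t ht
      have := hmono (t + 1) T (Nat.succ_le_of_lt (Finset.mem_range.mp ht))
      linarith
    calc (T : ℝ) * (f (x T) - f xstar)
        = ∑ _t ∈ Finset.range T, (f (x T) - f xstar) := by
          rw [Finset.sum_const, Finset.card_range, nsmul_eq_mul]
      _ ≤ _ := Finset.sum_le_sum h
  have hTpos : (0 : ℝ) < T := by exact_mod_cast hT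
  rw [le_div_iff₀ (by positivity : (0:ℝ) < 2 * T)]
  have h2 : (f (x T) - f xstar) * (2 * T) = 2 * ((T : ℝ) * (f (x T) - f xstar)) := by ring
  rw [h2]
  linarith
end

section
/- Let E be a real inner product space and f : E → ℝ convex and L-smooth (L > 0). Then the gradient of f is co-coercive: for all x y ∈ E, (1/L) * ‖∇f x − ∇f y‖² ≤ ⟪∇f x − ∇f y, x − y⟫. -/
open Set

/-- Derivative of `f` along the line `t ↦ x + t • v`. -/
lemma curve_hasDerivAt
    {E : Type*} [NormedAddCommGroup E] [InnerProductSpace ℝ E]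
    (f : E → ℝ) (f' : E → E)
    (hderiv : ∀ x : E, HasFDerivAt f (innerSL ℝ (f' x)) x)
    (x v : E) (t : ℝ) :
    HasDerivAt (fun s : ℝ => f (x + s • v)) (inner ℝ (f' (x + t • v)) v) t := by
  have hc : HasDerivAt (fun s : ℝ => x + s • v) v t := by
    simpa using ((hasDerivAt_id t).smul_const v).const_add x
  have := (hderiv (x + t • v)).comp_hasDerivAt t hc
  exact this

/-- Descent lemma for `L`-Lipschitz gradient. -/
lemma descent_lemma
    {E : Type*} [NormedAddCommGroup E] [InnerProductSpace ℝ E]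
    (f : E → ℝ) (f' : E → E) (L : ℝ) (hL : 0 < L)
    (hderiv : ∀ x : E, HasFDerivAt f (innerSL ℝ (f' x)) x)
    (hlip : ∀ x y : E, ‖f' x - f' y‖ ≤ L * ‖x - y‖)
    (x y : E) :
    f y ≤ f x + inner ℝ (f' x) (y - x) + L / 2 * ‖y - x‖ ^ 2 := by
  set v := y - x with hv
  set h : ℝ → ℝ := fun t => f (x + t • v) - t * inner ℝ (f' x) v - L / 2 * t ^ 2 * ‖v‖ ^ 2
    with hh
  have hd : ∀ t : ℝ, HasDerivAt h
      (inner ℝ (f' (x + t • v)) v - inner ℝ (f' x) v - L * t * ‖v‖ ^ 2) t := by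
    intro t
    have h1 := curve_hasDerivAt f f' hderiv x v t
    have h2 : HasDerivAt (fun t : ℝ => t * inner ℝ (f' x) v) (inner ℝ (f' x) v) t := by
      simpa using (hasDerivAt_id t).mul_const (inner ℝ (f' x) v : ℝ)
    have h3 : HasDerivAt (fun t : ℝ => L / 2 * t ^ 2 * ‖v‖ ^ 2) (L * t * ‖v‖ ^ 2) t := by
      have : HasDerivAt (fun t : ℝ => t ^ 2) (2 * t) t := by
        simpa using hasDerivAt_pow 2 t
      have := ((this.const_mul (L / 2)).mul_const (‖v‖ ^ 2))
      exact this.congr_deriv (by ring)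
    exact (h1.sub h2).sub h3
  have hanti : AntitoneOn h (Icc (0 : ℝ) 1) := by
    apply antitoneOn_of_deriv_nonpos (convex_Icc 0 1)
    · exact fun t _ => (hd t).differentiableAt.continuousAt.continuousWithinAt
    · intro t ht
      exact ((hd t).differentiableAt).differentiableWithinAt
    · intro t ht
      rw [interior_Icc] at ht
      rw [(hd t).deriv]
      have hb : (inner ℝ (f' (x + t • v)) v : ℝ) - inner ℝ (f' x) v ≤ L * t * ‖v‖ ^ 2 := by
        have : (inner ℝ (f' (x + t • v)) v : ℝ) - inner ℝ (f' x) v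
            = inner ℝ (f' (x + t • v) - f' x) v := by
          rw [inner_sub_left]
        rw [this]
        calc (inner ℝ (f' (x + t • v) - f' x) v : ℝ)
            ≤ ‖f' (x + t • v) - f' x‖ * ‖v‖ := real_inner_le_norm _ _
          _ ≤ (L * ‖x + t • v - x‖) * ‖v‖ := by
              have := hlip (x + t • v) x
              exact mul_le_mul_of_nonneg_right this (norm_nonneg _)
          _ = L * t * ‖v‖ ^ 2 := by
              have : ‖x + t • v - x‖ = t * ‖v‖ := by
                simp [norm_smul, abs_of_pos ht.1]
              rw [this]; ring
      linarith
  have h10 : h 1 ≤ h 0 := hanti (by norm_num) (by norm_num) zero_le_one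
  have h0 : h 0 = f x := by simp [hh]
  have h1 : h 1 = f y - inner ℝ (f' x) v - L / 2 * ‖v‖ ^ 2 := by
    simp [hh, hv]
  rw [h0, h1] at h10
  linarith

/-- Gradient inequality for a convex differentiable function. -/
lemma convex_grad_ineq
    {E : Type*} [NormedAddCommGroup E] [InnerProductSpace ℝ E]
    (f : E → ℝ) (f' : E → E)
    (hconv : ConvexOn ℝ (Set.univ : Set E) f)
    (hderiv : ∀ x : E, HasFDerivAt f (innerSL ℝ (f' x)) x)
    (x y : E) :
    f x + inner ℝ (f' x) (y - x) ≤ f y := by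
  set v := y - x with hv
  set φ : ℝ → ℝ := fun t => f (x + t • v) with hφ
  have hφconv : ConvexOn ℝ (Set.univ : Set ℝ) φ := by
    have := hconv.comp_affineMap (AffineMap.lineMap x y : ℝ →ᵃ[ℝ] E)
    have heq : φ = f ∘ (AffineMap.lineMap x y : ℝ →ᵃ[ℝ] E) := by
      funext t
      simp [hφ, AffineMap.lineMap_apply, hv]
      rw [add_comm]
    rw [heq]
    simpa using this
  have hder0 : HasDerivAt φ (inner ℝ (f' x) v) 0 := by
    have := curve_hasDerivAt f f' hderiv x v 0
    simpa using this
  have := hφconv.le_slope_of_hasDerivAt (mem_univ 0) (mem_univ 1) zero_lt_one hder0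
  rw [slope_def_field] at this
  have hφ0 : φ 0 = f x := by simp [hφ]
  have hφ1 : φ 1 = f y := by simp [hφ, hv]
  rw [hφ0, hφ1] at this
  simp at this
  linarith

/-- Strong lower bound: convex + L-smooth. -/
lemma strong_lower_bound
    {E : Type*} [NormedAddCommGroup E] [InnerProductSpace ℝ E]
    (f : E → ℝ) (f' : E → E) (L : ℝ) (hL : 0 < L)
    (hconv : ConvexOn ℝ (Set.univ : Set E) f)
    (hderiv : ∀ x : E, HasFDerivAt f (innerSL ℝ (f' x)) x)
    (hlip : ∀ x y : E, ‖f' x - f' y‖ ≤ L * ‖x - y‖)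
    (x y : E) :
    f x + inner ℝ (f' x) (y - x) + 1 / (2 * L) * ‖f' y - f' x‖ ^ 2 ≤ f y := by
  -- g z = f z - ⟪f' x, z⟫
  set g : E → ℝ := fun z => f z - inner ℝ (f' x) z with hg
  set g' : E → E := fun z => f' z - f' x with hg'
  have hgderiv : ∀ z : E, HasFDerivAt g (innerSL ℝ (g' z)) z := by
    intro z
    have h1 := hderiv z
    have h2 : HasFDerivAt (fun z : E => (inner ℝ (f' x) z : ℝ)) (innerSL ℝ (f' x)) z :=
      (innerSL ℝ (f' x)).hasFDerivAt
    have := h1.sub h2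
    refine this.congr_fderiv ?_
    ext w
    simp [hg', inner_sub_left]
  have hgconv : ConvexOn ℝ (Set.univ : Set E) g := by
    apply hconv.sub
    exact ((innerSL ℝ (f' x)) : E →ₗ[ℝ] ℝ).concaveOn convex_univ
  have hglip : ∀ a b : E, ‖g' a - g' b‖ ≤ L * ‖a - b‖ := by
    intro a b
    simpa [hg', sub_sub_sub_cancel_right] using hlip a b
  -- g is minimized at x since g' x = 0
  have hgx : g' x = 0 := by simp [hg']
  have hmin : ∀ z : E, g x ≤ g z := by
    intro z
    have := convex_grad_ineq g g' hgconv hgderiv x z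
    rw [hgx] at this
    simpa using this
  -- descent step from y
  set w : E := y - (1 / L) • g' y with hw
  have hdesc := descent_lemma g g' L hL hgderiv hglip y w
  have hwy : w - y = -((1 / L) • g' y) := by rw [hw]; abel
  have hinner : (inner ℝ (g' y) (w - y) : ℝ) = -(1 / L) * ‖g' y‖ ^ 2 := by
    rw [hwy, inner_neg_right, real_inner_smul_right, real_inner_self_eq_norm_sq]
    ring
  have hnorm : ‖w - y‖ ^ 2 = (1 / L) ^ 2 * ‖g' y‖ ^ 2 := by
    rw [hwy, norm_neg, norm_smul]
    rw [mul_pow]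
    congr 1
    rw [Real.norm_eq_abs, abs_of_pos (by positivity), sq]
  rw [hinner, hnorm] at hdesc
  have key : g x ≤ g y - 1 / (2 * L) * ‖g' y‖ ^ 2 := by
    have := (hmin w).trans hdesc
    have hL' : L ≠ 0 := hL.ne'
    calc g x ≤ g y + -(1 / L) * ‖g' y‖ ^ 2 + L / 2 * ((1 / L) ^ 2 * ‖g' y‖ ^ 2) := this
      _ = g y - 1 / (2 * L) * ‖g' y‖ ^ 2 := by field_simp; ring
  have hgxv : g x = f x - inner ℝ (f' x) x := rfl
  have hgyv : g y = f y - inner ℝ (f' x) y := rfl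
  have hgy' : g' y = f' y - f' x := rfl
  rw [hgxv, hgyv, hgy'] at key
  have : (inner ℝ (f' x) (y - x) : ℝ) = inner ℝ (f' x) y - inner ℝ (f' x) x := by
    rw [inner_sub_right]
  linarith

/-- Co-coercivity of the gradient of a convex `L`-smooth function:
`(1/L) ‖∇f x − ∇f y‖² ≤ ⟪∇f x − ∇f y, x − y⟫`. -/
theorem gradient_cocoercive
    {E : Type*} [NormedAddCommGroup E] [InnerProductSpace ℝ E]
    (f : E → ℝ) (f' : E → E) (L : ℝ) (hL : 0 < L)
    (hconv : ConvexOn ℝ (Set.univ : Set E) f)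
    (hderiv : ∀ x : E, HasFDerivAt f (innerSL ℝ (f' x)) x)
    (hlip : ∀ x y : E, ‖f' x - f' y‖ ≤ L * ‖x - y‖) :
    ∀ x y : E, (1 / L) * ‖f' x - f' y‖ ^ 2 ≤ inner ℝ (f' x - f' y) (x - y) := by
  intro x y
  have h1 := strong_lower_bound f f' L hL hconv hderiv hlip x y
  have h2 := strong_lower_bound f f' L hL hconv hderiv hlip y x
  have hns : ‖f' x - f' y‖ = ‖f' y - f' x‖ := norm_sub_rev _ _
  have e1 : (inner ℝ (f' x - f' y) (x - y) : ℝ)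
      = inner ℝ (f' x) (x - y) - inner ℝ (f' y) (x - y) := by rw [inner_sub_left]
  have e2 : (inner ℝ (f' x) (y - x) : ℝ) = -inner ℝ (f' x) (x - y) := by
    rw [← inner_neg_right]; congr 1; abel
  have e3 : (inner ℝ (f' y) (x - y) : ℝ) = -inner ℝ (f' y) (y - x) := by
    rw [← inner_neg_right]; congr 1; abel
  have hfrac : 1 / L = 1 / (2 * L) + 1 / (2 * L) := by
    field_simp; ring
  rw [hns, hfrac, e1, e3]
  have h1' := h1
  rw [e2] at h1'
  rw [hns] at h2
  linarith
end

section
/- Let d : ℕ and let A : Matrix (Fin d) (Fin d) ℝ have nonnegative entries (A i j ≥ 0 for all i j). Then trace (exp A) ≥ d, where exp denotes the matrix exponential, and trace (exp A) = d if and only if A is a DAG matrix, i.e. the digraph of A has no directed cycles. -/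
open Matrix

private lemma pow_entry_nonneg {d : ℕ} {A : Matrix (Fin d) (Fin d) ℝ}
    (hA : ∀ i j : Fin d, 0 ≤ A i j) : ∀ (n : ℕ) (i j : Fin d), 0 ≤ (A ^ n) i j := by
  intro n
  induction n with
  | zero =>
    intro i j
    rw [pow_zero, Matrix.one_apply]
    split <;> norm_num
  | succ n ih =>
    intro i j
    rw [pow_succ, Matrix.mul_apply]
    exact Finset.sum_nonneg fun k _ => mul_nonneg (ih i k) (hA k j)

private lemma transGen_of_pow_ne_zero {d : ℕ} {A : Matrix (Fin d) (Fin d) ℝ} :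
    ∀ (n : ℕ) (i j : Fin d), (A ^ (n + 1)) i j ≠ 0 →
      Relation.TransGen (fun a b => A a b ≠ 0) i j := by
  intro n
  induction n with
  | zero =>
    intro i j h
    rw [pow_one] at h
    exact Relation.TransGen.single h
  | succ n ih =>
    intro i j h
    rw [pow_succ, Matrix.mul_apply] at h
    obtain ⟨k, -, hk⟩ := Finset.exists_ne_zero_of_sum_ne_zero h
    exact (ih i k (left_ne_zero_of_mul hk)).tail (right_ne_zero_of_mul hk)

private lemma pow_pos_of_transGen {d : ℕ} {A : Matrix (Fin d) (Fin d) ℝ}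
    (hA : ∀ i j : Fin d, 0 ≤ A i j) {i j : Fin d}
    (h : Relation.TransGen (fun a b => A a b ≠ 0) i j) :
    ∃ n : ℕ, 0 < (A ^ (n + 1)) i j := by
  induction h with
  | single hb => exact ⟨0, by rw [pow_one]; exact lt_of_le_of_ne (hA _ _) (Ne.symm hb)⟩
  | tail hab hbc ih =>
    obtain ⟨n, hn⟩ := ih
    refine ⟨n + 1, ?_⟩
    rw [pow_succ, Matrix.mul_apply]
    exact Finset.sum_pos'
      (fun k _ => mul_nonneg (pow_entry_nonneg hA _ _ _) (hA _ _))
      ⟨_, Finset.mem_univ _, mul_pos hn (lt_of_le_of_ne (hA _ _) (Ne.symm hbc))⟩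

/-- For a matrix `A` with nonnegative entries, `trace (exp A) ≥ d`, with equality if and
only if `A` is a DAG matrix (its digraph has no directed cycles). -/
theorem trace_exp_ge_card_iff_dag {d : ℕ} (A : Matrix (Fin d) (Fin d) ℝ)
    (hA : ∀ i j : Fin d, 0 ≤ A i j) :
    (d : ℝ) ≤ (NormedSpace.exp A).trace
      ∧ ((NormedSpace.exp A).trace = d
          ↔ ∀ i : Fin d, ¬ Relation.TransGen (fun i j => A i j ≠ 0) i i) := by
  letI : SeminormedRing (Matrix (Fin d) (Fin d) ℝ) := Matrix.linftyOpSemiNormedRing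
  letI : NormedRing (Matrix (Fin d) (Fin d) ℝ) := Matrix.linftyOpNormedRing
  letI : NormedAlgebra ℝ (Matrix (Fin d) (Fin d) ℝ) := Matrix.linftyOpNormedAlgebra
  have hsum : HasSum (fun n : ℕ => ((n.factorial : ℝ)⁻¹) • A ^ n) (NormedSpace.exp A) :=
    NormedSpace.exp_series_hasSum_exp' A
  have htrace_cont : Continuous (Matrix.traceLinearMap (Fin d) ℝ ℝ) :=
    LinearMap.continuous_of_finiteDimensional _
  have htr : HasSum (fun n : ℕ => ((n.factorial : ℝ)⁻¹) * (A ^ n).trace)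
      ((NormedSpace.exp A).trace) := by
    have := hsum.map (Matrix.traceLinearMap (Fin d) ℝ ℝ).toAddMonoidHom htrace_cont
    simp only [Function.comp_def] at this
    simpa [Matrix.trace_smul, smul_eq_mul] using this
  set f : ℕ → ℝ := fun n => ((n.factorial : ℝ)⁻¹) * (A ^ n).trace with hf
  have hnn : ∀ n, 0 ≤ f n := fun n =>
    mul_nonneg (by positivity)
      (Finset.sum_nonneg fun i _ => pow_entry_nonneg hA n i i)
  have hf0 : f 0 = d := by
    simp [hf, Matrix.trace_one]
  have htsum : (NormedSpace.exp A).trace = ∑' n, f n := htr.tsum_eq.symm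
  have hsummable : Summable f := htr.summable
  constructor
  · rw [htsum, ← hf0]
    exact hsummable.le_tsum 0 fun n _ => hnn n
  · rw [htsum, hsummable.tsum_eq_zero_add, hf0]
    have hsummable' : Summable fun n => f (n + 1) :=
      (summable_nat_add_iff 1).mpr hsummable
    constructor
    · intro heq i hTG
      have hzero : ∑' n, f (n + 1) = 0 := by linarith
      have hall : ∀ n, f (n + 1) = 0 := by
        intro n
        refine le_antisymm ?_ (hnn _)
        calc f (n + 1) ≤ ∑' m, f (m + 1) := hsummable'.le_tsum n fun m _ => hnn _
        _ = 0 := hzero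
      obtain ⟨n, hn⟩ := pow_pos_of_transGen hA hTG
      have h1 : (0 : ℝ) < ((n + 1).factorial : ℝ)⁻¹ := by positivity
      have h2 : 0 < (A ^ (n + 1)).trace :=
        Finset.sum_pos' (fun k _ => pow_entry_nonneg hA _ _ _)
          ⟨i, Finset.mem_univ _, hn⟩
      have := mul_pos h1 h2
      rw [show ((n + 1).factorial : ℝ)⁻¹ * (A ^ (n + 1)).trace = f (n + 1) from rfl, hall n] at this
      exact lt_irrefl 0 this
    · intro hdag
      have hall : ∀ n, f (n + 1) = 0 := by
        intro n
        have hdiag : ∀ i : Fin d, (A ^ (n + 1)) i i = 0 := by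
          intro i
          by_contra hne
          exact hdag i (transGen_of_pow_ne_zero n i i hne)
        simp [hf, Matrix.trace, Matrix.diag, hdiag]
      rw [tsum_congr hall, tsum_zero, add_zero]
end
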